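/- arXiv:2003.07149 — 2 statements merged into one kernel-verified Lean document; each statement's English description precedes it below -/
import Mathlib

section
/- For any integer t ≥ 2, the toric ideal I_{G_t} of the graph G_t is generated by the binomials in G₁ ∪ G₂ ∪ G₃, where G₁ = { a_i b_j − a_j b_i : 1 ≤ i < j ≤ t }, G₂ = { a_i a_j f_1 f_3 e_2 − f_2 e_1 e_3 b_i b_j : 1 ≤ i < j ≤ t }, and G₃ = { a_i² f_1 f_3 e_2 − f_2 e_1 e_3 b_i² : 1 ≤ i ≤ t }. -/
open MvPolynomial

noncomputable section

namespace ToricPaper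

variable (K : Type) [Field K]

/-- The Hilbert function of `R/I`: dimension of the degree `j` part. -/
def hilb {σ : Type} (I : Ideal (MvPolynomial σ K)) (j : ℕ) : ℕ :=
  Module.finrank K (Submodule.map (Ideal.Quotient.mkₐ K I).toLinearMap
    (homogeneousSubmodule σ K j))

/-- The Hilbert series of `R/I` as a power series over `ℤ`. -/
def hilbertSeries {σ : Type} (I : Ideal (MvPolynomial σ K)) : PowerSeries ℤ :=
  PowerSeries.mk fun j => (hilb K I j : ℤ)

/-- `h` is the `h`-polynomial of `R/I`: `h(1) ≠ 0` and
`HS_{R/I}(x) = h(x)/(1-x)^{dim R/I}`. -/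
def IsHPolynomial {σ : Type} (I : Ideal (MvPolynomial σ K)) (h : Polynomial ℤ) : Prop :=
  Polynomial.eval 1 h ≠ 0 ∧
  ∃ d : ℕ, ringKrullDim (MvPolynomial σ K ⧸ I) = d ∧
    (h : PowerSeries ℤ) = hilbertSeries K I * (1 - PowerSeries.X) ^ d

/-- A homogeneous ideal: all homogeneous components of its elements belong to it. -/
def IsHomogeneousIdeal {σ : Type} (I : Ideal (MvPolynomial σ K)) : Prop :=
  ∀ f ∈ I, ∀ n : ℕ, homogeneousComponent n f ∈ I

/-- The module of `i`-chains of the Koszul complex of the variables with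
coefficients in `R/I`. -/
abbrev KChain {σ : Type} (I : Ideal (MvPolynomial σ K)) (i : ℕ) : Type :=
  {S : Finset σ // S.card = i} → (MvPolynomial σ K ⧸ I)

/-- The Koszul differential. -/
def kd {σ : Type} [Finite σ] (I : Ideal (MvPolynomial σ K)) (i : ℕ)
    (f : KChain K I i) : KChain K I (i - 1) :=
  letI := Fintype.ofFinite σ
  letI := Classical.decEq σ
  letI : LinearOrder σ := IsWellOrder.linearOrder WellOrderingRel
  fun T =>
    if hi : 1 ≤ i then
      ∑ x : σ,
        if hx : x ∈ T.1 then 0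
        else ((-1 : ℤ) ^ (T.1.filter (fun y => y < x)).card) •
          (Ideal.Quotient.mk I (X x) *
            f ⟨insert x T.1, by rw [Finset.card_insert_of_notMem hx, T.2]; omega⟩)
    else 0

/-- The internal degree `j` part of the `i`-chains of the Koszul complex:
each Koszul basis element `e_S`, `|S| = i`, has degree `i`, so coefficients
lie in the degree `j - i` part of `R/I`. -/
def degPart {σ : Type} (I : Ideal (MvPolynomial σ K)) (i j : ℕ) :
    Set (KChain K I i) :=
  {f | (∀ T, f T ∈ Submodule.map (Ideal.Quotient.mkₐ K I).toLinearMap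
          (homogeneousSubmodule σ K (j - i))) ∧ (i ≤ j ∨ f = 0)}

/-- Degree `j` Koszul cycles in homological degree `i`. -/
def cyclesSet {σ : Type} [Finite σ] (I : Ideal (MvPolynomial σ K)) (i j : ℕ) :
    Set (KChain K I i) :=
  degPart K I i j ∩ {f | kd K I i f = 0}

/-- Degree `j` Koszul boundaries in homological degree `i`. -/
def boundariesSet {σ : Type} [Finite σ] (I : Ideal (MvPolynomial σ K)) (i j : ℕ) :
    Set (KChain K I i) :=
  kd K I (i + 1) '' (degPart K I (i + 1) j)

/-- The graded Betti numbers `β_{i,j}(R/I) = dim_K Tor_i(R/I, K)_j`, computed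
as the dimension of the degree `j` part of the `i`-th homology of the Koszul
complex of the variables with coefficients in `R/I`. -/
def betti {σ : Type} [Finite σ] (I : Ideal (MvPolynomial σ K)) (i j : ℕ) : ℕ :=
  Module.finrank K
    ((Submodule.span K (cyclesSet K I i j)) ⧸
      (Submodule.comap (Submodule.span K (cyclesSet K I i j)).subtype
        (Submodule.span K (boundariesSet K I i j))))

/-- Castelnuovo-Mumford regularity: `max { j - i | β_{i,j}(R/I) ≠ 0 }`. -/
def regularity {σ : Type} [Finite σ] (I : Ideal (MvPolynomial σ K)) : ℕ :=
  sSup {r | ∃ i j, betti K I i j ≠ 0 ∧ j = i + r}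

/-- Projective dimension: `max { i | β_{i,j}(R/I) ≠ 0 for some j }`. -/
def pdim {σ : Type} [Finite σ] (I : Ideal (MvPolynomial σ K)) : ℕ :=
  sSup {p | ∃ j, betti K I p j ≠ 0}

/-- `β_{a,b}(R/I)` is an extremal graded Betti number. -/
def IsExtremalBetti {σ : Type} [Finite σ] (I : Ideal (MvPolynomial σ K))
    (a b : ℕ) : Prop :=
  betti K I a b ≠ 0 ∧
  ∀ i j : ℕ, a ≤ i → b < j → ((b : ℤ) - a ≤ (j : ℤ) - i) → betti K I i j = 0

/-- The depth of `R/I`: the maximal length of a regular sequence on `R/I`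
consisting of elements of the irrelevant maximal ideal `⟨x_1, …, x_n⟩`. -/
def depth {σ : Type} (I : Ideal (MvPolynomial σ K)) : ℕ :=
  sSup {n | ∃ rs : List (MvPolynomial σ K), rs.length = n ∧
    (∀ x ∈ rs, x ∈ Ideal.span (Set.range (X : σ → MvPolynomial σ K))) ∧
    RingTheory.Sequence.IsRegular (MvPolynomial σ K ⧸ I) rs}

/-- The initial ideal of `I` with respect to a monomial order: the ideal
generated by the leading monomials of the nonzero elements of `I`. -/
def initialIdeal {σ : Type} (m : MonomialOrder σ) (I : Ideal (MvPolynomial σ K)) :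
    Ideal (MvPolynomial σ K) :=
  Ideal.span {g | ∃ f ∈ I, f ≠ 0 ∧ ∃ u ∈ f.support,
    (∀ v ∈ f.support, m.toSyn v ≤ m.toSyn u) ∧ g = monomial u 1}

/-- The toric ideal of a finite simple graph `G`: the kernel of the map
`K[E] → K[V]` sending the variable of an edge `{u,v}` to `uv`. -/
def toricIdeal {V : Type} (G : SimpleGraph V) : Ideal (MvPolynomial G.edgeSet K) :=
  RingHom.ker (MvPolynomial.aeval (R := K)
    (fun e : G.edgeSet =>
      Sym2.lift ⟨fun u v => (X u : MvPolynomial V K) * X v,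
        fun _ _ => mul_comm _ _⟩ (e : Sym2 V))).toRingHom



/-! ### The graph `G_t` and its edge ring -/

/-- Edge variables of the graph `G_t`:
`a i = {x₁, y i}`, `f j` the triangle at `x₂`, `e j` the triangle at `x₁`,
`b i = {x₂, y i}`. -/
abbrev EVar (t : ℕ) : Type := (Fin t ⊕ Fin 3) ⊕ (Fin 3 ⊕ Fin t)

/-- The edge `a i = {x₁, y i}` of `G_t`. -/
def EVar.a {t : ℕ} (i : Fin t) : EVar t := Sum.inl (Sum.inl i)
/-- The edges `f 0 = f₁ = {x₂,w₁}`, `f 1 = f₂ = {w₁,w₂}`, `f 2 = f₃ = {w₂,x₂}`. -/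
def EVar.f {t : ℕ} (j : Fin 3) : EVar t := Sum.inl (Sum.inr j)
/-- The edges `e 0 = e₁ = {x₁,z₁}`, `e 1 = e₂ = {z₁,z₂}`, `e 2 = e₃ = {z₂,x₁}`. -/
def EVar.e {t : ℕ} (j : Fin 3) : EVar t := Sum.inr (Sum.inl j)
/-- The edge `b i = {x₂, y i}` of `G_t`. -/
def EVar.b {t : ℕ} (i : Fin t) : EVar t := Sum.inr (Sum.inr i)

/-- Vertices of `G_t`: `inl 0 = x₁`, `inl 1 = x₂`, `inl 2 = z₁`, `inl 3 = z₂`,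
`inl 4 = w₁`, `inl 5 = w₂`, and `inr i = y i`. -/
abbrev GtVertex (t : ℕ) : Type := Fin 6 ⊕ Fin t

/-- The map sending each edge variable of `G_t` to the product of the
variables of its two endpoints. -/
def gtMap (t : ℕ) : EVar t → MvPolynomial (GtVertex t) K
  | Sum.inl (Sum.inl i) => X (Sum.inl 0) * X (Sum.inr i)
  | Sum.inl (Sum.inr j) =>
      ![X (Sum.inl 1) * X (Sum.inl 4), X (Sum.inl 4) * X (Sum.inl 5),
        X (Sum.inl 5) * X (Sum.inl 1)] j
  | Sum.inr (Sum.inl j) =>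
      ![X (Sum.inl 0) * X (Sum.inl 2), X (Sum.inl 2) * X (Sum.inl 3),
        X (Sum.inl 3) * X (Sum.inl 0)] j
  | Sum.inr (Sum.inr i) => X (Sum.inl 1) * X (Sum.inr i)

/-- The toric ideal `I_{G_t} ⊆ K[E_t]`. -/
def toricGt (t : ℕ) : Ideal (MvPolynomial (EVar t) K) :=
  RingHom.ker (MvPolynomial.aeval (R := K) (gtMap K t)).toRingHom

/-- The rank of a variable in the order
`a₁ > ⋯ > a_t > f₁ > f₂ > f₃ > e₁ > e₂ > e₃ > b₁ > ⋯ > b_t`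
(smaller rank = larger variable). -/
def evarRank (t : ℕ) : EVar t → ℕ
  | Sum.inl (Sum.inl i) => (i : ℕ)
  | Sum.inl (Sum.inr j) => t + (j : ℕ)
  | Sum.inr (Sum.inl j) => t + 3 + (j : ℕ)
  | Sum.inr (Sum.inr i) => t + 6 + (i : ℕ)

/-- The graded reverse lexicographic comparison of exponent vectors for the
variable order `a₁ > ⋯ > a_t > f₁ > f₂ > f₃ > e₁ > e₂ > e₃ > b₁ > ⋯ > b_t`:
`u ≤ v` iff `deg u < deg v`, or the degrees agree and either `u = v` or
`u x > v x` at the smallest variable `x` (i.e. largest rank) where `u` and `v`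
differ. -/
def grevlexLe (t : ℕ) (u v : EVar t →₀ ℕ) : Prop :=
  (u.sum fun _ n => n) < (v.sum fun _ n => n) ∨
  ((u.sum fun _ n => n) = (v.sum fun _ n => n) ∧
    (u = v ∨ ∃ x, v x < u x ∧ ∀ y, evarRank t x < evarRank t y → u y = v y))

/-- `m` is the graded reverse lexicographic monomial order with
`a₁ > ⋯ > a_t > f₁ > f₂ > f₃ > e₁ > e₂ > e₃ > b₁ > ⋯ > b_t`. -/
def IsGrevlex (t : ℕ) (m : MonomialOrder (EVar t)) : Prop :=
  ∀ u v : EVar t →₀ ℕ, (m.toSyn u ≤ m.toSyn v) ↔ grevlexLe t u v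

/-- The binomials `a_i b_j - a_j b_i`, `1 ≤ i < j ≤ t`. -/
def G1Set (t : ℕ) : Set (MvPolynomial (EVar t) K) :=
  {g | ∃ i j : Fin t, i < j ∧
    g = X (EVar.a i) * X (EVar.b j) - X (EVar.a j) * X (EVar.b i)}

/-- The binomials `a_i a_j f₁ f₃ e₂ - f₂ e₁ e₃ b_i b_j`, `1 ≤ i < j ≤ t`. -/
def G2Set (t : ℕ) : Set (MvPolynomial (EVar t) K) :=
  {g | ∃ i j : Fin t, i < j ∧
    g = X (EVar.a i) * X (EVar.a j) * X (EVar.f 0) * X (EVar.f 2) * X (EVar.e 1)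
      - X (EVar.f 1) * X (EVar.e 0) * X (EVar.e 2) * X (EVar.b i) * X (EVar.b j)}

/-- The binomials `a_i² f₁ f₃ e₂ - f₂ e₁ e₃ b_i²`, `1 ≤ i ≤ t`. -/
def G3Set (t : ℕ) : Set (MvPolynomial (EVar t) K) :=
  {g | ∃ i : Fin t,
    g = X (EVar.a i) ^ 2 * X (EVar.f 0) * X (EVar.f 2) * X (EVar.e 1)
      - X (EVar.f 1) * X (EVar.e 0) * X (EVar.e 2) * X (EVar.b i) ^ 2}

/-- The monomials `a_i b_j`, `1 ≤ j < i ≤ t`. -/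
def M1Set (t : ℕ) : Set (MvPolynomial (EVar t) K) :=
  {g | ∃ i j : Fin t, j < i ∧ g = X (EVar.a i) * X (EVar.b j)}

/-- The monomials `a_i a_j f₁ f₃ e₂`, `1 ≤ i < j ≤ t`. -/
def M2Set (t : ℕ) : Set (MvPolynomial (EVar t) K) :=
  {g | ∃ i j : Fin t, i < j ∧
    g = X (EVar.a i) * X (EVar.a j) * X (EVar.f 0) * X (EVar.f 2) * X (EVar.e 1)}

/-- The monomials `a_i² f₁ f₃ e₂`, `1 ≤ i ≤ t`. -/
def M3Set (t : ℕ) : Set (MvPolynomial (EVar t) K) :=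
  {g | ∃ i : Fin t,
    g = X (EVar.a i) ^ 2 * X (EVar.f 0) * X (EVar.f 2) * X (EVar.e 1)}

-- weights
def wt {t : ℕ} : EVar t → (GtVertex t →₀ ℕ)
  | Sum.inl (Sum.inl i) => Finsupp.single (Sum.inl 0) 1 + Finsupp.single (Sum.inr i) 1
  | Sum.inl (Sum.inr j) =>
      ![Finsupp.single (Sum.inl 1) 1 + Finsupp.single (Sum.inl 4) 1,
        Finsupp.single (Sum.inl 4) 1 + Finsupp.single (Sum.inl 5) 1,
        Finsupp.single (Sum.inl 5) 1 + Finsupp.single (Sum.inl 1) 1] j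
  | Sum.inr (Sum.inl j) =>
      ![Finsupp.single (Sum.inl 0) 1 + Finsupp.single (Sum.inl 2) 1,
        Finsupp.single (Sum.inl 2) 1 + Finsupp.single (Sum.inl 3) 1,
        Finsupp.single (Sum.inl 3) 1 + Finsupp.single (Sum.inl 0) 1] j
  | Sum.inr (Sum.inr i) => Finsupp.single (Sum.inl 1) 1 + Finsupp.single (Sum.inr i) 1

lemma gtMap_eq {t : ℕ} (x : EVar t) :
    gtMap K t x = monomial (wt x) (1 : K) := by
  rcases x with (i | j) | (j | i)
  · simp [gtMap, wt, X, monomial_mul]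
  · fin_cases j <;> simp [gtMap, wt, X, monomial_mul]
  · fin_cases j <;> simp [gtMap, wt, X, monomial_mul]
  · simp [gtMap, wt, X, monomial_mul]

def Phi {t : ℕ} (u : EVar t →₀ ℕ) : GtVertex t →₀ ℕ := u.sum fun x n => n • wt x

lemma Phi_zero {t : ℕ} : Phi (0 : EVar t →₀ ℕ) = 0 := Finsupp.sum_zero_index

lemma Phi_add {t : ℕ} (u v : EVar t →₀ ℕ) : Phi (u + v) = Phi u + Phi v := by
  unfold Phi
  exact Finsupp.sum_add_index (by simp) (by intros; rw [add_smul])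

lemma Phi_single {t : ℕ} (x : EVar t) (n : ℕ) : Phi (Finsupp.single x n) = n • wt x := by
  unfold Phi; rw [Finsupp.sum_single_index]; simp

lemma aeval_monomial_one {t : ℕ} (u : EVar t →₀ ℕ) :
    MvPolynomial.aeval (gtMap K t) (monomial u (1 : K)) = monomial (Phi u) (1 : K) := by
  induction u using Finsupp.induction with
  | zero => simp [Phi_zero]
  | single_add x n w _ _ ih =>
    rw [show monomial (Finsupp.single x n + w) (1:K) =
      monomial (Finsupp.single x n) 1 * monomial w 1 by rw [monomial_mul, one_mul]]
    rw [map_mul, ih, ← X_pow_eq_monomial, map_pow, aeval_X, gtMap_eq, monomial_pow,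
      one_pow, monomial_mul, one_mul, Phi_add, Phi_single]

def sa {t : ℕ} (u : EVar t →₀ ℕ) : ℕ := ∑ i : Fin t, u (EVar.a i)
def sb {t : ℕ} (u : EVar t →₀ ℕ) : ℕ := ∑ i : Fin t, u (EVar.b i)

lemma Phi_apply {t : ℕ} (u : EVar t →₀ ℕ) (w : GtVertex t) :
    Phi u w = ∑ x : EVar t, u x * wt x w := by
  unfold Phi
  rw [Finsupp.sum_apply, Finsupp.sum_fintype]
  · simp
  · simp

lemma Phi_x1 {t : ℕ} (u : EVar t →₀ ℕ) :
    Phi u (Sum.inl 0) = sa u + (u (EVar.e 0) + u (EVar.e 2)) := by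
  rw [Phi_apply]
  rw [Fintype.sum_sum_type, Fintype.sum_sum_type, Fintype.sum_sum_type]
  simp [Fin.sum_univ_three, wt, Finsupp.single_apply, EVar.a, EVar.e, sa]

lemma Phi_x2 {t : ℕ} (u : EVar t →₀ ℕ) :
    Phi u (Sum.inl 1) = sb u + (u (EVar.f 0) + u (EVar.f 2)) := by
  rw [Phi_apply, Fintype.sum_sum_type, Fintype.sum_sum_type, Fintype.sum_sum_type]
  simp [Fin.sum_univ_three, wt, Finsupp.single_apply, EVar.b, EVar.f, sb, add_comm]

lemma Phi_z1 {t : ℕ} (u : EVar t →₀ ℕ) :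
    Phi u (Sum.inl 2) = u (EVar.e 0) + u (EVar.e 1) := by
  rw [Phi_apply, Fintype.sum_sum_type, Fintype.sum_sum_type, Fintype.sum_sum_type]
  simp [Fin.sum_univ_three, wt, Finsupp.single_apply, EVar.e]

lemma Phi_z2 {t : ℕ} (u : EVar t →₀ ℕ) :
    Phi u (Sum.inl 3) = u (EVar.e 1) + u (EVar.e 2) := by
  rw [Phi_apply, Fintype.sum_sum_type, Fintype.sum_sum_type, Fintype.sum_sum_type]
  simp [Fin.sum_univ_three, wt, Finsupp.single_apply, EVar.e]

lemma Phi_w1 {t : ℕ} (u : EVar t →₀ ℕ) :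
    Phi u (Sum.inl 4) = u (EVar.f 0) + u (EVar.f 1) := by
  rw [Phi_apply, Fintype.sum_sum_type, Fintype.sum_sum_type, Fintype.sum_sum_type]
  simp [Fin.sum_univ_three, wt, Finsupp.single_apply, EVar.f]

lemma Phi_w2 {t : ℕ} (u : EVar t →₀ ℕ) :
    Phi u (Sum.inl 5) = u (EVar.f 1) + u (EVar.f 2) := by
  rw [Phi_apply, Fintype.sum_sum_type, Fintype.sum_sum_type, Fintype.sum_sum_type]
  simp [Fin.sum_univ_three, wt, Finsupp.single_apply, EVar.f]

lemma Phi_y {t : ℕ} (u : EVar t →₀ ℕ) (i : Fin t) :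
    Phi u (Sum.inr i) = u (EVar.a i) + u (EVar.b i) := by
  rw [Phi_apply, Fintype.sum_sum_type, Fintype.sum_sum_type, Fintype.sum_sum_type]
  simp [Fin.sum_univ_three, wt, Finsupp.single_apply, EVar.a, EVar.b]

/-- Normal (reduced) exponent vectors. -/
def NormalExp {t : ℕ} (u : EVar t →₀ ℕ) : Prop :=
  (∀ i j : Fin t, j < i → u (EVar.a i) = 0 ∨ u (EVar.b j) = 0) ∧
  ((0 < u (EVar.f 0) ∧ 0 < u (EVar.f 2) ∧ 0 < u (EVar.e 1)) → sa u ≤ 1)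

lemma apart_aux {t : ℕ} (u v : EVar t →₀ ℕ)
    (hy : ∀ i, u (EVar.a i) + u (EVar.b i) = v (EVar.a i) + v (EVar.b i))
    (hsa : sa u = sa v)
    (hu : ∀ i j : Fin t, j < i → u (EVar.a i) = 0 ∨ u (EVar.b j) = 0)
    (hv : ∀ i j : Fin t, j < i → v (EVar.a i) = 0 ∨ v (EVar.b j) = 0)
    (i : Fin t) (hi : v (EVar.a i) < u (EVar.a i)) : False := by
  have hex : ∃ j, u (EVar.a j) < v (EVar.a j) := by
    by_contra h
    push_neg at h
    have : sa v < sa u :=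
      Finset.sum_lt_sum (fun j _ => h j) ⟨i, Finset.mem_univ i, hi⟩
    omega
  obtain ⟨j, hj⟩ := hex
  rcases lt_trichotomy j i with hlt | rfl | hgt
  · rcases hu i j hlt with h0 | h0
    · omega
    · have := hy j; omega
  · omega
  · rcases hv j i hgt with h0 | h0
    · omega
    · have := hy i; omega

lemma inj_on_normal {t : ℕ} (u v : EVar t →₀ ℕ) (hu : NormalExp u) (hv : NormalExp v)
    (h : Phi u = Phi v) : u = v := by
  have hy : ∀ i, u (EVar.a i) + u (EVar.b i) = v (EVar.a i) + v (EVar.b i) := by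
    intro i; have := DFunLike.congr_fun h (Sum.inr i)
    simpa [Phi_y] using this
  have hx1 := DFunLike.congr_fun h (Sum.inl 0)
  have hx2 := DFunLike.congr_fun h (Sum.inl 1)
  have hz1 := DFunLike.congr_fun h (Sum.inl 2)
  have hz2 := DFunLike.congr_fun h (Sum.inl 3)
  have hw1 := DFunLike.congr_fun h (Sum.inl 4)
  have hw2 := DFunLike.congr_fun h (Sum.inl 5)
  rw [Phi_x1, Phi_x1] at hx1
  rw [Phi_x2, Phi_x2] at hx2
  rw [Phi_z1, Phi_z1] at hz1
  rw [Phi_z2, Phi_z2] at hz2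
  rw [Phi_w1, Phi_w1] at hw1
  rw [Phi_w2, Phi_w2] at hw2
  have hyy : sa u + sb u = sa v + sb v := by
    unfold sa sb
    rw [← Finset.sum_add_distrib, ← Finset.sum_add_distrib]
    exact Finset.sum_congr rfl fun i _ => hy i
  -- triangle coordinates agree
  have he1 : u (EVar.e 1) = v (EVar.e 1) := by
    rcases lt_trichotomy (u (EVar.e 1)) (v (EVar.e 1)) with hlt | heq | hgt
    · exfalso
      have h2 : sa v ≤ 1 := hv.2 ⟨by omega, by omega, by omega⟩
      omega
    · exact heq
    · exfalso
      have h2 : sa u ≤ 1 := hu.2 ⟨by omega, by omega, by omega⟩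
      omega
  have hsa : sa u = sa v := by omega
  have ha : ∀ i, u (EVar.a i) = v (EVar.a i) := by
    intro i
    rcases lt_trichotomy (u (EVar.a i)) (v (EVar.a i)) with hlt | heq | hgt
    · exact absurd (apart_aux v u (fun k => (hy k).symm) hsa.symm hv.1 hu.1 i hlt) not_false
    · exact heq
    · exact absurd (apart_aux u v hy hsa hu.1 hv.1 i hgt) not_false
  ext x
  rcases x with (i | j) | (j | i)
  · exact ha i
  · fin_cases j
    · show u (EVar.f 0) = v (EVar.f 0); omega
    · show u (EVar.f 1) = v (EVar.f 1); omega
    · show u (EVar.f 2) = v (EVar.f 2); omega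
  · fin_cases j
    · show u (EVar.e 0) = v (EVar.e 0); omega
    · show u (EVar.e 1) = v (EVar.e 1); omega
    · show u (EVar.e 2) = v (EVar.e 2); omega
  · have h1 := hy i; have h2 := ha i
    show u (EVar.b i) = v (EVar.b i); omega

def wgt {t : ℕ} (u : EVar t →₀ ℕ) : ℕ := ∑ i : Fin t, (i : ℕ) * u (EVar.a i)
def mea {t : ℕ} (u : EVar t →₀ ℕ) : ℕ := (t + 1) * sa u + wgt u

lemma sa_add {t : ℕ} (u v : EVar t →₀ ℕ) : sa (u + v) = sa u + sa v := by
  simp [sa, Finsupp.add_apply, Finset.sum_add_distrib]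

lemma wgt_add {t : ℕ} (u v : EVar t →₀ ℕ) : wgt (u + v) = wgt u + wgt v := by
  simp [wgt, Finsupp.add_apply, mul_add, Finset.sum_add_distrib]

lemma sa_single_a {t : ℕ} (i : Fin t) (n : ℕ) : sa (Finsupp.single (EVar.a i) n) = n := by
  simp [sa, EVar.a, Finsupp.single_apply]

lemma sa_single_f {t : ℕ} (j : Fin 3) (n : ℕ) : sa (Finsupp.single (EVar.f j) n : EVar t →₀ ℕ) = 0 := by
  simp [sa, EVar.a, EVar.f, Finsupp.single_apply]

lemma sa_single_e {t : ℕ} (j : Fin 3) (n : ℕ) : sa (Finsupp.single (EVar.e j) n : EVar t →₀ ℕ) = 0 := by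
  simp [sa, EVar.a, EVar.e, Finsupp.single_apply]

lemma sa_single_b {t : ℕ} (i : Fin t) (n : ℕ) : sa (Finsupp.single (EVar.b i) n) = 0 := by
  simp [sa, EVar.a, EVar.b, Finsupp.single_apply]

lemma wgt_single_a {t : ℕ} (i : Fin t) (n : ℕ) : wgt (Finsupp.single (EVar.a i) n) = i * n := by
  simp [wgt, EVar.a, Finsupp.single_apply, mul_ite]

lemma wgt_single_f {t : ℕ} (j : Fin 3) (n : ℕ) : wgt (Finsupp.single (EVar.f j) n : EVar t →₀ ℕ) = 0 := by
  simp [wgt, EVar.a, EVar.f, Finsupp.single_apply]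

lemma wgt_single_e {t : ℕ} (j : Fin 3) (n : ℕ) : wgt (Finsupp.single (EVar.e j) n : EVar t →₀ ℕ) = 0 := by
  simp [wgt, EVar.a, EVar.e, Finsupp.single_apply]

lemma wgt_single_b {t : ℕ} (i : Fin t) (n : ℕ) : wgt (Finsupp.single (EVar.b i) n) = 0 := by
  simp [wgt, EVar.a, EVar.b, Finsupp.single_apply]

lemma mono_X {t : ℕ} (y : EVar t) :
    monomial (Finsupp.single y 1) (1 : K) = X y := rfl

lemma mono_cons {t : ℕ} (s : EVar t →₀ ℕ) (y : EVar t) :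
    monomial (s + Finsupp.single y 1) (1 : K) = monomial s 1 * X y := by
  rw [← mono_X K y, monomial_mul, one_mul]

lemma mono_sq {t : ℕ} (y : EVar t) :
    monomial (Finsupp.single y 2) (1 : K) = X y ^ 2 := X_pow_eq_monomial.symm

lemma mono_cons2 {t : ℕ} (s : EVar t →₀ ℕ) (y : EVar t) :
    monomial (s + Finsupp.single y 2) (1 : K) = monomial s 1 * X y ^ 2 := by
  rw [← mono_sq K y, monomial_mul, one_mul]

lemma red_add {t : ℕ} (u p q : EVar t →₀ ℕ) (hpu : p ≤ u) :
    (u - p + q) + p = u + q := by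
  rw [add_right_comm, tsub_add_cancel_of_le hpu]

lemma Phi_red {t : ℕ} (u p q : EVar t →₀ ℕ) (hpu : p ≤ u) (hpq : Phi p = Phi q) :
    Phi (u - p + q) = Phi u := by
  rw [Phi_add, ← hpq, ← Phi_add, tsub_add_cancel_of_le hpu]

lemma mono_sub_mem {t : ℕ} (J : Ideal (MvPolynomial (EVar t) K))
    (u p q : EVar t →₀ ℕ) (hpu : p ≤ u)
    (hg : monomial p (1 : K) - monomial q 1 ∈ J) :
    monomial u (1 : K) - monomial (u - p + q) 1 ∈ J := by
  have h : monomial u (1:K) - monomial (u - p + q) 1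
      = monomial (u - p) 1 * (monomial p 1 - monomial q 1) := by
    rw [mul_sub, monomial_mul, monomial_mul, mul_one, tsub_add_cancel_of_le hpu]
  rw [h]
  exact Ideal.mul_mem_left _ _ hg

lemma exists_two {t : ℕ} (u : EVar t →₀ ℕ) (h : 2 ≤ sa u) :
    (∃ i : Fin t, 2 ≤ u (EVar.a i)) ∨
      ∃ i j : Fin t, i < j ∧ 0 < u (EVar.a i) ∧ 0 < u (EVar.a j) := by
  have h1 : ∃ i : Fin t, 0 < u (EVar.a i) := by
    by_contra hc
    push_neg at hc
    have : sa u = 0 := Finset.sum_eq_zero fun i _ => by have := hc i; omega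
    omega
  obtain ⟨i, hi⟩ := h1
  by_cases h2 : 2 ≤ u (EVar.a i)
  · exact Or.inl ⟨i, h2⟩
  · have hsum : u (EVar.a i) + ∑ k ∈ Finset.univ.erase i, u (EVar.a k) = sa u := by
      rw [show sa u = ∑ k : Fin t, u (EVar.a k) from rfl]
      exact Finset.add_sum_erase _ (fun k => u (EVar.a k)) (Finset.mem_univ i)
    have h3 : ∃ j ∈ Finset.univ.erase i, 0 < u (EVar.a j) := by
      by_contra hc
      push_neg at hc
      have : ∑ k ∈ Finset.univ.erase i, u (EVar.a k) = 0 :=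
        Finset.sum_eq_zero fun k hk => by have := hc k hk; omega
      omega
    obtain ⟨j, hj, hj2⟩ := h3
    have hne : j ≠ i := Finset.ne_of_mem_erase hj
    rcases lt_or_gt_of_ne hne with hlt | hgt
    · exact Or.inr ⟨j, i, hlt, hj2, hi⟩
    · exact Or.inr ⟨i, j, hgt, hi, hj2⟩

lemma le_two {t : ℕ} (x y : EVar t) (hxy : x ≠ y) (u : EVar t →₀ ℕ)
    (hx : 0 < u x) (hy : 0 < u y) :
    Finsupp.single x 1 + Finsupp.single y 1 ≤ u := by
  rw [Finsupp.le_def]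
  intro z
  simp only [Finsupp.add_apply, Finsupp.single_apply]
  split_ifs <;> subst_vars <;> simp_all <;> omega

lemma le_five {t : ℕ} (x1 x2 x3 x4 x5 : EVar t)
    (h12 : x1 ≠ x2) (h13 : x1 ≠ x3) (h14 : x1 ≠ x4) (h15 : x1 ≠ x5)
    (h23 : x2 ≠ x3) (h24 : x2 ≠ x4) (h25 : x2 ≠ x5)
    (h34 : x3 ≠ x4) (h35 : x3 ≠ x5) (h45 : x4 ≠ x5)
    (u : EVar t →₀ ℕ) (hx1 : 0 < u x1) (hx2 : 0 < u x2) (hx3 : 0 < u x3)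
    (hx4 : 0 < u x4) (hx5 : 0 < u x5) :
    Finsupp.single x1 1 + Finsupp.single x2 1 + Finsupp.single x3 1 +
      Finsupp.single x4 1 + Finsupp.single x5 1 ≤ u := by
  rw [Finsupp.le_def]
  intro z
  simp only [Finsupp.add_apply, Finsupp.single_apply]
  split_ifs <;> subst_vars <;> simp_all <;> omega

lemma le_four_sq {t : ℕ} (x1 x2 x3 x4 : EVar t)
    (h12 : x1 ≠ x2) (h13 : x1 ≠ x3) (h14 : x1 ≠ x4)
    (h23 : x2 ≠ x3) (h24 : x2 ≠ x4) (h34 : x3 ≠ x4)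
    (u : EVar t →₀ ℕ) (hx1 : 2 ≤ u x1) (hx2 : 0 < u x2) (hx3 : 0 < u x3)
    (hx4 : 0 < u x4) :
    Finsupp.single x1 2 + Finsupp.single x2 1 + Finsupp.single x3 1 +
      Finsupp.single x4 1 ≤ u := by
  rw [Finsupp.le_def]
  intro z
  simp only [Finsupp.add_apply, Finsupp.single_apply]
  split_ifs <;> subst_vars <;> simp_all <;> omega

lemma sa_red {t : ℕ} (u p q : EVar t →₀ ℕ) (hpu : p ≤ u) :
    sa (u - p + q) + sa p = sa u + sa q := by
  have h := congrArg sa (red_add u p q hpu)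
  rwa [sa_add (u - p + q) p, sa_add u q] at h

lemma wgt_red {t : ℕ} (u p q : EVar t →₀ ℕ) (hpu : p ≤ u) :
    wgt (u - p + q) + wgt p = wgt u + wgt q := by
  have h := congrArg wgt (red_add u p q hpu)
  rwa [wgt_add (u - p + q) p, wgt_add u q] at h

lemma reduce_step {t : ℕ} (u : EVar t →₀ ℕ) (hnn : ¬ NormalExp u) :
    ∃ u' : EVar t →₀ ℕ,
      monomial u (1 : K) - monomial u' 1 ∈
        Ideal.span (G1Set K t ∪ G2Set K t ∪ G3Set K t) ∧
      Phi u' = Phi u ∧ mea u' < mea u := by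
  set J := Ideal.span (G1Set K t ∪ G2Set K t ∪ G3Set K t) with hJ
  rcases not_and_or.mp hnn with h | h
  · -- case M1 : a_i b_j with j < i
    push_neg at h
    obtain ⟨i, j, hji, hai, hbj⟩ := h
    have hij : (EVar.a i : EVar t) ≠ EVar.a j := by
      simp only [EVar.a, ne_eq, Sum.inl.injEq]
      exact fun hh => absurd hh (Fin.ne_of_gt hji)
    set p : EVar t →₀ ℕ := Finsupp.single (EVar.a i) 1 + Finsupp.single (EVar.b j) 1 with hp
    set q : EVar t →₀ ℕ := Finsupp.single (EVar.a j) 1 + Finsupp.single (EVar.b i) 1 with hq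
    have hab : (EVar.a i : EVar t) ≠ EVar.b j := by simp [EVar.a, EVar.b]
    have hpu : p ≤ u := le_two _ _ hab u (by omega) (by omega)
    have hpq : Phi p = Phi q := by
      rw [hp, hq, Phi_add, Phi_add, Phi_single, Phi_single, Phi_single, Phi_single]
      simp only [one_smul, wt, EVar.a, EVar.b]
      abel
    have hgen : (X (EVar.a j) * X (EVar.b i) - X (EVar.a i) * X (EVar.b j) :
        MvPolynomial (EVar t) K) ∈ J := by
      rw [hJ]
      exact Ideal.subset_span (Set.mem_union_left _ (Set.mem_union_left _ ⟨j, i, hji, rfl⟩))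
    have hmem : monomial p (1 : K) - monomial q 1 ∈ J := by
      have he : monomial p (1 : K) - monomial q 1
          = -(X (EVar.a j) * X (EVar.b i) - X (EVar.a i) * X (EVar.b j)) := by
        rw [hp, hq]
        simp only [mono_cons, mono_X]
        ring
      rw [he]
      exact neg_mem hgen
    refine ⟨u - p + q, mono_sub_mem K J u p q hpu hmem, Phi_red u p q hpu hpq, ?_⟩
    have hsa := sa_red u p q hpu
    have hwg := wgt_red u p q hpu
    have hsp : sa p = 1 := by simp [hp, sa_add, sa_single_a, sa_single_b]
    have hsq : sa q = 1 := by simp [hq, sa_add, sa_single_a, sa_single_b]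
    have hwp : wgt p = i := by simp [hp, wgt_add, wgt_single_a, wgt_single_b]
    have hwq : wgt q = j := by simp [hq, wgt_add, wgt_single_a, wgt_single_b]
    have hji' : (j : ℕ) < (i : ℕ) := hji
    have h1 : sa (u - p + q) = sa u := by omega
    have h2 : wgt (u - p + q) < wgt u := by omega
    show (t + 1) * sa (u - p + q) + wgt (u - p + q) < (t + 1) * sa u + wgt u
    rw [h1]
    exact Nat.add_lt_add_left h2 _
  · -- case M2/M3
    push_neg at h
    obtain ⟨⟨hf0, hf2, he1⟩, hsa2⟩ := h
    have hff : (EVar.f 0 : EVar t) ≠ EVar.f 2 := by simp [EVar.f]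
    have hfe0 : (EVar.f 0 : EVar t) ≠ EVar.e 1 := by simp [EVar.f, EVar.e]
    have hfe2 : (EVar.f 2 : EVar t) ≠ EVar.e 1 := by simp [EVar.f, EVar.e]
    rcases exists_two u (by omega) with ⟨i, hi⟩ | ⟨i, j, hij, hi, hj⟩
    · -- square case, generator in G3
      set p : EVar t →₀ ℕ := Finsupp.single (EVar.a i) 2 + Finsupp.single (EVar.f 0) 1 +
        Finsupp.single (EVar.f 2) 1 + Finsupp.single (EVar.e 1) 1 with hp
      set q : EVar t →₀ ℕ := Finsupp.single (EVar.f 1) 1 + Finsupp.single (EVar.e 0) 1 +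
        Finsupp.single (EVar.e 2) 1 + Finsupp.single (EVar.b i) 2 with hq
      have hpu : p ≤ u := le_four_sq _ _ _ _
        (by simp [EVar.a, EVar.f]) (by simp [EVar.a, EVar.f]) (by simp [EVar.a, EVar.e])
        hff hfe0 hfe2 u hi hf0 hf2 he1
      have hpq : Phi p = Phi q := by
        rw [hp, hq]
        simp only [Phi_add, Phi_single, one_smul, wt, EVar.a, EVar.b, EVar.e, EVar.f,
          Matrix.cons_val_zero, Matrix.cons_val_one, Matrix.head_cons, Matrix.cons_val_two,
          Matrix.tail_cons]
        abel
      have hmem : monomial p (1 : K) - monomial q 1 ∈ J := by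
        have he : monomial p (1 : K) - monomial q 1
            = X (EVar.a i) ^ 2 * X (EVar.f 0) * X (EVar.f 2) * X (EVar.e 1)
              - X (EVar.f 1) * X (EVar.e 0) * X (EVar.e 2) * X (EVar.b i) ^ 2 := by
          rw [hp, hq]
          simp only [mono_cons, mono_cons2, mono_X, mono_sq]
        rw [he, hJ]
        exact Ideal.subset_span (Set.mem_union_right _ ⟨i, rfl⟩)
      refine ⟨u - p + q, mono_sub_mem K J u p q hpu hmem, Phi_red u p q hpu hpq, ?_⟩
      have hsa := sa_red u p q hpu
      have hwg := wgt_red u p q hpu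
      have hsp : sa p = 2 := by
        simp [hp, sa_add, sa_single_a, sa_single_b, sa_single_e, sa_single_f]
      have hsq : sa q = 0 := by
        simp [hq, sa_add, sa_single_a, sa_single_b, sa_single_e, sa_single_f]
      have hwq : wgt q = 0 := by
        simp [hq, wgt_add, wgt_single_a, wgt_single_b, wgt_single_e, wgt_single_f]
      have h1 : sa (u - p + q) < sa u := by omega
      have h2 : wgt (u - p + q) ≤ wgt u := by omega
      show (t + 1) * sa (u - p + q) + wgt (u - p + q) < (t + 1) * sa u + wgt u
      exact add_lt_add_of_lt_of_le (mul_lt_mul_of_pos_left h1 (by omega)) h2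
    · -- two distinct indices, generator in G2
      set p : EVar t →₀ ℕ := Finsupp.single (EVar.a i) 1 + Finsupp.single (EVar.a j) 1 +
        Finsupp.single (EVar.f 0) 1 + Finsupp.single (EVar.f 2) 1 +
        Finsupp.single (EVar.e 1) 1 with hp
      set q : EVar t →₀ ℕ := Finsupp.single (EVar.f 1) 1 + Finsupp.single (EVar.e 0) 1 +
        Finsupp.single (EVar.e 2) 1 + Finsupp.single (EVar.b i) 1 +
        Finsupp.single (EVar.b j) 1 with hq
      have haa : (EVar.a i : EVar t) ≠ EVar.a j := by
        simp only [EVar.a, ne_eq, Sum.inl.injEq]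
        exact fun hh => absurd hh (Fin.ne_of_lt hij)
      have hpu : p ≤ u := le_five _ _ _ _ _
        haa (by simp [EVar.a, EVar.f]) (by simp [EVar.a, EVar.f]) (by simp [EVar.a, EVar.e])
        (by simp [EVar.a, EVar.f]) (by simp [EVar.a, EVar.f]) (by simp [EVar.a, EVar.e])
        hff hfe0 hfe2 u hi hj hf0 hf2 he1
      have hpq : Phi p = Phi q := by
        rw [hp, hq]
        simp only [Phi_add, Phi_single, one_smul, wt, EVar.a, EVar.b, EVar.e, EVar.f,
          Matrix.cons_val_zero, Matrix.cons_val_one, Matrix.head_cons, Matrix.cons_val_two,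
          Matrix.tail_cons]
        abel
      have hmem : monomial p (1 : K) - monomial q 1 ∈ J := by
        have he : monomial p (1 : K) - monomial q 1
            = X (EVar.a i) * X (EVar.a j) * X (EVar.f 0) * X (EVar.f 2) * X (EVar.e 1)
              - X (EVar.f 1) * X (EVar.e 0) * X (EVar.e 2) * X (EVar.b i) * X (EVar.b j) := by
          rw [hp, hq]
          simp only [mono_cons, mono_X]
        rw [he, hJ]
        exact Ideal.subset_span
          (Set.mem_union_left _ (Set.mem_union_right _ ⟨i, j, hij, rfl⟩))
      refine ⟨u - p + q, mono_sub_mem K J u p q hpu hmem, Phi_red u p q hpu hpq, ?_⟩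
      have hsa := sa_red u p q hpu
      have hwg := wgt_red u p q hpu
      have hsp : sa p = 2 := by
        simp [hp, sa_add, sa_single_a, sa_single_b, sa_single_e, sa_single_f]
      have hsq : sa q = 0 := by
        simp [hq, sa_add, sa_single_a, sa_single_b, sa_single_e, sa_single_f]
      have hwq : wgt q = 0 := by
        simp [hq, wgt_add, wgt_single_a, wgt_single_b, wgt_single_e, wgt_single_f]
      have h1 : sa (u - p + q) < sa u := by omega
      have h2 : wgt (u - p + q) ≤ wgt u := by omega
      show (t + 1) * sa (u - p + q) + wgt (u - p + q) < (t + 1) * sa u + wgt u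
      exact add_lt_add_of_lt_of_le (mul_lt_mul_of_pos_left h1 (by omega)) h2

lemma key_binomial {t : ℕ} :
    ∀ n (u v : EVar t →₀ ℕ), mea u + mea v ≤ n → Phi u = Phi v →
      monomial u (1 : K) - monomial v 1 ∈
        Ideal.span (G1Set K t ∪ G2Set K t ∪ G3Set K t) := by
  intro n
  induction n using Nat.strong_induction_on with
  | _ n ih =>
    intro u v hn hPhi
    by_cases huv : u = v
    · subst huv; simp
    · by_cases hu : NormalExp u
      · by_cases hv : NormalExp v
        · exact absurd (inj_on_normal u v hu hv hPhi) huv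
        · obtain ⟨v', hmem, hphi, hlt⟩ := reduce_step K v hv
          have h2 : monomial u (1 : K) - monomial v' 1 ∈
              Ideal.span (G1Set K t ∪ G2Set K t ∪ G3Set K t) :=
            ih (mea u + mea v') (by omega) u v' le_rfl (hPhi.trans hphi.symm)
          have he : monomial u (1 : K) - monomial v 1
              = (monomial u 1 - monomial v' 1) - (monomial v 1 - monomial v' 1) := by ring
          rw [he]
          exact sub_mem h2 hmem
      · obtain ⟨u', hmem, hphi, hlt⟩ := reduce_step K u hu
        have h2 : monomial u' (1 : K) - monomial v 1 ∈
            Ideal.span (G1Set K t ∪ G2Set K t ∪ G3Set K t) :=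
          ih (mea u' + mea v) (by omega) u' v le_rfl (hphi.trans hPhi)
        have he : monomial u (1 : K) - monomial v 1
            = (monomial u 1 - monomial u' 1) + (monomial u' 1 - monomial v 1) := by ring
        rw [he]
        exact add_mem hmem h2

lemma aeval_mono {t : ℕ} (u : EVar t →₀ ℕ) (c : K) :
    MvPolynomial.aeval (gtMap K t) (monomial u c) = monomial (Phi u) c := by
  have h : (monomial u c : MvPolynomial (EVar t) K) = C c * monomial u 1 := by
    rw [C_mul_monomial, mul_one]
  rw [h, map_mul, aeval_C, aeval_monomial_one, algebraMap_eq, C_mul_monomial, mul_one]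

lemma ker_le_span {t : ℕ} :
    ∀ n (f : MvPolynomial (EVar t) K), f.support.card ≤ n →
      MvPolynomial.aeval (gtMap K t) f = 0 →
      f ∈ Ideal.span (G1Set K t ∪ G2Set K t ∪ G3Set K t) := by
  intro n
  induction n using Nat.strong_induction_on with
  | _ n ih =>
    intro f hcard hker
    by_cases hf : f = 0
    · simp [hf]
    · have hne : f.support.Nonempty := MvPolynomial.support_nonempty.mpr hf
      obtain ⟨u, hu⟩ := hne
      have hcu : coeff u f ≠ 0 := MvPolynomial.mem_support_iff.mp hu
      -- find a partner monomial with the same Phi image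
      have hexv : ∃ v ∈ f.support, v ≠ u ∧ Phi v = Phi u := by
        by_contra hc
        push_neg at hc
        have hsum : MvPolynomial.aeval (gtMap K t) f
            = ∑ w ∈ f.support, monomial (Phi w) (coeff w f) := by
          conv_lhs => rw [f.as_sum]
          rw [map_sum]
          exact Finset.sum_congr rfl fun w _ => aeval_mono K w _
        have h0 : coeff (Phi u) (MvPolynomial.aeval (gtMap K t) f) = 0 := by
          rw [hker]; simp
        rw [hsum, MvPolynomial.coeff_sum] at h0
        simp only [MvPolynomial.coeff_monomial] at h0
        have h1 : ∑ w ∈ f.support, (if Phi w = Phi u then coeff w f else 0) = coeff u f := by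
          rw [Finset.sum_eq_single_of_mem u hu]
          · simp
          · intro w hw hwu
            rw [if_neg (hc w hw hwu)]
        rw [h1] at h0
        exact hcu h0
      obtain ⟨v, hv, hvu, hphi⟩ := hexv
      set c := coeff u f with hc
      have hbin : monomial u (1 : K) - monomial v 1 ∈
          Ideal.span (G1Set K t ∪ G2Set K t ∪ G3Set K t) :=
        key_binomial K _ u v le_rfl hphi.symm
      set g := f - C c * (monomial u 1 - monomial v 1) with hg
      have hgker : MvPolynomial.aeval (gtMap K t) g = 0 := by
        rw [hg, map_sub, hker, map_mul, aeval_C, map_sub, aeval_mono, aeval_mono, hphi]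
        simp
      have hgsupp : g.support ⊆ f.support.erase u := by
        intro w hw
        have hcw : coeff w g ≠ 0 := MvPolynomial.mem_support_iff.mp hw
        rw [hg] at hcw
        simp only [coeff_sub, MvPolynomial.coeff_C_mul, coeff_sub,
          MvPolynomial.coeff_monomial] at hcw
        rcases eq_or_ne w u with rfl | hwu2
        · exfalso
          apply hcw
          rw [if_neg hvu, ← hc]
          ring_nf
          simp
        · rw [if_neg (fun h => hwu2 h.symm)] at hcw
          rcases eq_or_ne w v with rfl | hwv
          · exact Finset.mem_erase.mpr ⟨hwu2, hv⟩
          · rw [if_neg (fun h => hwv h.symm)] at hcw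
            refine Finset.mem_erase.mpr ⟨hwu2, MvPolynomial.mem_support_iff.mpr ?_⟩
            intro h0
            rw [h0] at hcw
            simp at hcw
      have hn1 : 1 ≤ n := le_trans (Finset.card_pos.mpr ⟨u, hu⟩) hcard
      have hgcard : g.support.card ≤ n - 1 := by
        have := Finset.card_le_card hgsupp
        have := Finset.card_erase_of_mem hu
        omega
      have hg2 : g ∈ Ideal.span (G1Set K t ∪ G2Set K t ∪ G3Set K t) :=
        ih (n - 1) (by omega) g hgcard hgker
      have hfe : f = g + C c * (monomial u 1 - monomial v 1) := by rw [hg]; ring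
      rw [hfe]
      exact add_mem hg2 (Ideal.mul_mem_left _ _ hbin)

/-- Theorem 3.5. For `t ≥ 2`, the toric ideal `I_{G_t}` is
generated by `𝒢₁ ∪ 𝒢₂ ∪ 𝒢₃`, where `𝒢₁ = {a_i b_j - a_j b_i : i < j}`,
`𝒢₂ = {a_i a_j f₁ f₃ e₂ - f₂ e₁ e₃ b_i b_j : i < j}` and
`𝒢₃ = {a_i² f₁ f₃ e₂ - f₂ e₁ e₃ b_i² : 1 ≤ i ≤ t}`. -/
theorem statement7 (K : Type) [Field K] (t : ℕ) (ht : 2 ≤ t) :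
    toricGt K t = Ideal.span (G1Set K t ∪ G2Set K t ∪ G3Set K t) := by
  apply le_antisymm
  · intro f hf
    have hker : MvPolynomial.aeval (gtMap K t) f = 0 := hf
    exact ker_le_span K f.support.card f le_rfl hker
  · rw [Ideal.span_le]
    rintro g ((⟨i, j, hij, rfl⟩ | ⟨i, j, hij, rfl⟩) | ⟨i, rfl⟩) <;>
      · show MvPolynomial.aeval (gtMap K t) _ = 0
        simp only [map_sub, map_mul, map_pow, aeval_X, gtMap, EVar.a, EVar.b, EVar.e, EVar.f,
          Matrix.cons_val_zero, Matrix.cons_val_one, Matrix.head_cons, Matrix.cons_val_two,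
          Matrix.tail_cons]
        ring

end ToricPaper
end
end

section
/- Fix an integer t ≥ 2. In the polynomial ring K[E_t], the colon ideal ⟨ a_i b_j : 1 ≤ j < i ≤ t ⟩ : ⟨ a_t a_{t−1} f_1 f_3 e_2 ⟩ equals the ideal ⟨ b_1, …, b_{t−1} ⟩ generated by the variables b_1,…,b_{t−1}. -/
open MvPolynomial

noncomputable section

namespace ToricPaper

variable (K : Type) [Field K]

/-- from the proof of Theorem 3.7, Case 1. For `t ≥ 2`, in
`K[E_t]` one has
`⟨a_i b_j : 1 ≤ j < i ≤ t⟩ : ⟨a_t a_{t-1} f₁ f₃ e₂⟩ = ⟨b₁, …, b_{t-1}⟩`. -/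
theorem statement10 (K : Type) [Field K] (t : ℕ) (ht : 2 ≤ t) :
    Submodule.colon (Ideal.span (M1Set K t))
      ((Ideal.span {X (EVar.a (⟨t - 1, by omega⟩ : Fin t)) *
        X (EVar.a (⟨t - 2, by omega⟩ : Fin t)) *
        X (EVar.f 0) * X (EVar.f 2) * X (EVar.e 1)} : Ideal (MvPolynomial (EVar t) K)) :
        Set (MvPolynomial (EVar t) K))
    = Ideal.span {g : MvPolynomial (EVar t) K | ∃ j : Fin t, (j : ℕ) < t - 1 ∧
        g = X (EVar.b j)} := by
  classical
  set i1 : Fin t := (⟨t - 1, by omega⟩ : Fin t) with hi1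
  set i2 : Fin t := (⟨t - 2, by omega⟩ : Fin t) with hi2
  set m : MvPolynomial (EVar t) K :=
    X (EVar.a i1) * X (EVar.a i2) * X (EVar.f 0) * X (EVar.f 2) * X (EVar.e 1) with hm
  set S : Set (EVar t) := {v : EVar t | ∃ j : Fin t, (j : ℕ) < t - 1 ∧ v = EVar.b j} with hS
  have hset : {g : MvPolynomial (EVar t) K | ∃ j : Fin t, (j : ℕ) < t - 1 ∧
      g = X (EVar.b j)} = MvPolynomial.X '' S := by
    ext g
    constructor
    · rintro ⟨j, hj, rfl⟩; exact ⟨EVar.b j, ⟨j, hj, rfl⟩, rfl⟩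
    · rintro ⟨v, ⟨j, hj, rfl⟩, rfl⟩; exact ⟨j, hj, rfl⟩
  rw [hset]
  refine le_antisymm ?_ ?_
  · intro r hr
    have hrm : r * m ∈ Ideal.span (M1Set K t) := Ideal.mem_colon_span_singleton.mp hr
    have hIJ : Ideal.span (M1Set K t) ≤
        Ideal.span (MvPolynomial.X '' S : Set (MvPolynomial (EVar t) K)) := by
      rw [Ideal.span_le]
      rintro g ⟨i, j, hij, rfl⟩
      have h1 : (j : ℕ) < (i : ℕ) := hij
      have h2 : (i : ℕ) < t := i.isLt
      have hbj : (X (EVar.b j) : MvPolynomial (EVar t) K) ∈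
          Ideal.span (MvPolynomial.X '' S : Set (MvPolynomial (EVar t) K)) :=
        Ideal.subset_span ⟨EVar.b j, ⟨j, by omega, rfl⟩, rfl⟩
      exact Ideal.mul_mem_left _ _ hbj
    have hJ := hIJ hrm
    rw [mem_ideal_span_X_image] at hJ
    rw [mem_ideal_span_X_image]
    intro u hu
    set d : EVar t →₀ ℕ := Finsupp.single (EVar.a i1) 1 + Finsupp.single (EVar.a i2) 1 +
      Finsupp.single (EVar.f 0) 1 + Finsupp.single (EVar.f 2) 1 +
      Finsupp.single (EVar.e 1) 1 with hd
    have hmd : m = monomial d 1 := by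
      rw [hm, hd]
      simp only [X, monomial_mul, mul_one]
    have hcoeff : coeff (u + d) (r * m) ≠ 0 := by
      rw [hmd, coeff_mul_monomial, mul_one]
      exact mem_support_iff.mp hu
    obtain ⟨v, hvS, hv⟩ := hJ (u + d) (mem_support_iff.mpr hcoeff)
    refine ⟨v, hvS, ?_⟩
    obtain ⟨j, hj, rfl⟩ := hvS
    have hdb : d (EVar.b j) = 0 := by
      rw [hd]
      simp [Finsupp.single_apply, EVar.a, EVar.b, EVar.e, EVar.f]
    rw [Finsupp.add_apply, hdb, add_zero] at hv
    exact hv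
  · rw [Ideal.span_le]
    rintro g ⟨v, ⟨j, hj, rfl⟩, rfl⟩
    refine SetLike.mem_coe.mpr (Ideal.mem_colon_span_singleton.mpr ?_)
    have hgen : (X (EVar.a i1) * X (EVar.b j) : MvPolynomial (EVar t) K) ∈ M1Set K t := by
      refine ⟨i1, j, ?_, rfl⟩
      rw [Fin.lt_def]
      exact hj
    have hfact : X (EVar.b j) * m =
        (X (EVar.a i1) * X (EVar.b j)) *
          (X (EVar.a i2) * X (EVar.f 0) * X (EVar.f 2) * X (EVar.e 1)) := by
      rw [hm]; ring
    rw [hfact]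
    exact Ideal.mul_mem_right _ _ (Ideal.subset_span hgen)

end ToricPaper
end
end
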